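/- Encoding correctness for a one-hidden-layer ReLU network: f(x) = ℓ (where f(x) = argmax_ℓ (W₂ relu(W₁x + b₁) + b₂)_ℓ with ties broken toward ℓ) holds if and only if there exist vectors x⁰, x¹, x² with x⁰ = x, x¹ = relu(W₁x⁰ + b₁) characterized by the disjunctive ReLU constraints, x² = W₂x¹ + b₂, and x²_ℓ ≥ x²_{ℓ'} for all ℓ' ≠ ℓ. -/
import Mathlib

theorem encoding_correctness (n h k : ℕ)
    (W₁ : Matrix (Fin h) (Fin n) ℝ) (b₁ : Fin h → ℝ)
    (W₂ : Matrix (Fin k) (Fin h) ℝ) (b₂ : Fin k → ℝ)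
    (ℓ : Fin k) (f : (Fin n → ℝ) → Fin k)
    (hf : ∀ x, f x = ℓ ↔ ∀ ℓ' : Fin k,
      (W₂.mulVec (fun j => max (W₁.mulVec x j + b₁ j) 0) + b₂) ℓ' ≤
      (W₂.mulVec (fun j => max (W₁.mulVec x j + b₁ j) 0) + b₂) ℓ) :
    ∀ x : Fin n → ℝ, f x = ℓ ↔
      ∃ (x0 : Fin n → ℝ) (x1 : Fin h → ℝ) (x2 : Fin k → ℝ),
        x0 = x ∧
        (∀ j : Fin h,
          (W₁.mulVec x0 j + b₁ j ≤ 0 ∧ x1 j = 0) ∨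
          (W₁.mulVec x0 j + b₁ j ≥ 0 ∧ x1 j = W₁.mulVec x0 j + b₁ j)) ∧
        x2 = W₂.mulVec x1 + b₂ ∧
        (∀ ℓ' : Fin k, ℓ' ≠ ℓ → x2 ℓ' ≤ x2 ℓ) := by
  intro x
  rw [hf x]
  constructor
  · intro hmax
    refine ⟨x, fun j => max (W₁.mulVec x j + b₁ j) 0,
      W₂.mulVec (fun j => max (W₁.mulVec x j + b₁ j) 0) + b₂, rfl, ?_, rfl, ?_⟩
    · intro j
      rcases le_total (W₁.mulVec x j + b₁ j) 0 with hle | hge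
      · exact Or.inl ⟨hle, max_eq_right hle⟩
      · exact Or.inr ⟨hge, max_eq_left hge⟩
    · intro ℓ' _; exact hmax ℓ'
  · rintro ⟨x0, x1, x2, rfl, hrelu, rfl, hmax⟩
    have hx1 : x1 = fun j => max (W₁.mulVec x0 j + b₁ j) 0 := by
      funext j
      rcases hrelu j with ⟨hle, he⟩ | ⟨hge, he⟩
      · rw [he, max_eq_right hle]
      · rw [he, max_eq_left hge]
    intro ℓ'
    rcases eq_or_ne ℓ' ℓ with rfl | hne
    · exact le_rfl
    · simpa [hx1] using hmax ℓ' hne
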